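/- Let M be a free ℤ-module of finite rank with dual N, and let v ∈ N be a primitive vector. Then for any p ≥ 0, the p-th exterior power Λ^p(v^⊥) of the annihilator sublattice v^⊥ ⊂ M equals the kernel of the contraction map ι_v : Λ^p M → Λ^{p-1} M. -/

import Mathlib

set_option synthInstance.maxHeartbeats 1000000
set_option maxHeartbeats 1000000

/-- A dual vector is primitive if it is nonzero and is not an integer multiple `≥ 2` of
another dual vector. -/
def IsPrimitiveDual {M : Type*} [AddCommGroup M] [Module ℤ M]
    (v : Module.Dual ℤ M) : Prop :=
  v ≠ 0 ∧ ∀ (k : ℤ) (w : Module.Dual ℤ M), 2 ≤ k → v ≠ k • w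

section Aux

open ExteriorAlgebra

variable {M : Type*} [AddCommGroup M] [Module ℤ M]

/-- A primitive dual vector attains the value `1`. -/
lemma IsPrimitiveDual.exists_apply_eq_one {v : Module.Dual ℤ M} (hv : IsPrimitiveDual v) :
    ∃ e : M, v e = 1 := by
  obtain ⟨n, hn⟩ := IsPrincipalIdealRing.principal (LinearMap.range v : Ideal ℤ)
  have hdvd : ∀ m : M, n ∣ v m := by
    intro m
    have : v m ∈ LinearMap.range v := ⟨m, rfl⟩
    rw [hn, Ideal.submodule_span_eq, Ideal.mem_span_singleton] at this
    exact this
  have hnmem : n ∈ LinearMap.range v := by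
    rw [hn, Ideal.submodule_span_eq]
    exact Ideal.mem_span_singleton_self n
  obtain ⟨e, he⟩ := hnmem
  have hn0 : n ≠ 0 := by
    rintro rfl
    apply hv.1
    ext m
    simpa using zero_dvd_iff.mp (hdvd m)
  let w : Module.Dual ℤ M :=
    { toFun := fun m => v m / n
      map_add' := by
        intro a b
        obtain ⟨x, hx⟩ := hdvd a
        obtain ⟨y, hy⟩ := hdvd b
        simp [map_add, hx, hy, ← mul_add, Int.mul_ediv_cancel_left _ hn0]
      map_smul' := by
        intro c a
        obtain ⟨x, hx⟩ := hdvd a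
        simp [hx, mul_left_comm c n x, Int.mul_ediv_cancel_left _ hn0] }
  have hw : v = n • w := by
    ext m
    simp only [LinearMap.smul_apply, smul_eq_mul, w, LinearMap.coe_mk, AddHom.coe_mk]
    exact (Int.mul_ediv_cancel' (hdvd m)).symm
  have h1 : n = 1 ∨ n = -1 := by
    by_contra h
    rcases lt_or_ge n 0 with hneg | hpos
    · have hle : 2 ≤ -n := by omega
      exact hv.2 (-n) (-w) hle (by rw [hw, neg_smul_neg])
    · have hle : 2 ≤ n := by omega
      exact hv.2 n w hle hw
  rcases h1 with rfl | rfl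
  · exact ⟨e, he⟩
  · exact ⟨-e, by simp [he]⟩

/-- The span of wedges of `q` vectors annihilated by `v`. -/
noncomputable def perpWedge (v : Module.Dual ℤ M) (q : ℕ) :
    Submodule ℤ (ExteriorAlgebra ℤ M) :=
  Submodule.span ℤ {x : ExteriorAlgebra ℤ M |
    ∃ f : Fin q → M, (∀ i, v (f i) = 0) ∧ x = ExteriorAlgebra.ιMulti ℤ q f}

lemma ιMulti_cons {q : ℕ} (g : M) (h : Fin q → M) :
    ιMulti ℤ (q + 1) (Fin.cons g h) = ι ℤ g * ιMulti ℤ q h := by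
  have ht : Matrix.vecTail (Fin.cons g h) = h := by
    ext i; simp [Matrix.vecTail]
  rw [ιMulti_succ_apply, Fin.cons_zero, ht]

lemma mul_perpWedge_mem {v : Module.Dual ℤ M} {g : M} (hg : v g = 0) {q : ℕ}
    {a : ExteriorAlgebra ℤ M} (ha : a ∈ perpWedge v q) :
    ι ℤ g * a ∈ perpWedge v (q + 1) := by
  induction ha using Submodule.span_induction with
  | mem x hx =>
    obtain ⟨f, hf, rfl⟩ := hx
    refine Submodule.subset_span ⟨Fin.cons g f, ?_, (ιMulti_cons g f).symm⟩
    intro i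
    refine Fin.cases ?_ ?_ i
    · simpa using hg
    · intro j; simpa using hf j
  | zero => simp
  | add x y hx hy hx' hy' => rw [mul_add]; exact Submodule.add_mem _ hx' hy'
  | smul c x hx hx' => rw [mul_smul_comm]; exact Submodule.smul_mem _ c hx'

lemma contract_ιMulti_eq_zero (v : Module.Dual ℤ M) :
    ∀ {q : ℕ} (f : Fin q → M), (∀ i, v (f i) = 0) →
      CliffordAlgebra.contractLeft v (ιMulti ℤ q f) = 0 := by
  intro q
  induction q with
  | zero =>
    intro f _
    rw [ιMulti_zero_apply]
    exact CliffordAlgebra.contractLeft_one _ _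
  | succ q ih =>
    intro f hf
    rw [ιMulti_succ_apply, CliffordAlgebra.contractLeft_ι_mul,
      ih (Matrix.vecTail f) (fun i => hf i.succ), mul_zero, hf 0]
    simp only [sub_zero]
    exact zero_smul _ _

lemma contract_perpWedge_eq_zero {v : Module.Dual ℤ M} {q : ℕ}
    {a : ExteriorAlgebra ℤ M} (ha : a ∈ perpWedge v q) :
    CliffordAlgebra.contractLeft v a = 0 := by
  induction ha using Submodule.span_induction with
  | mem x hx => obtain ⟨f, hf, rfl⟩ := hx; exact contract_ιMulti_eq_zero v f hf
  | zero => simp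
  | add x y hx hy hx' hy' => rw [map_add, hx', hy', add_zero]
  | smul c x hx hx' => rw [map_smul, hx', smul_zero]

/-- The auxiliary submodule in which every `q`-wedge lies: a perp part plus `ι e` times
an element killed by contraction whose products with perp vectors stay perp. -/
noncomputable def wedgeDecomp (v : Module.Dual ℤ M) (e : M) (q : ℕ) :
    Submodule ℤ (ExteriorAlgebra ℤ M) :=
  perpWedge v q ⊔ Submodule.map (LinearMap.mulLeft ℤ (ι ℤ e))
    (LinearMap.ker (CliffordAlgebra.contractLeft v) ⊓
      ⨅ g : {g : M // v g = 0},
        Submodule.comap (LinearMap.mulLeft ℤ (ι ℤ (g : M))) (perpWedge v q))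

lemma ιMulti_mem_wedgeDecomp {v : Module.Dual ℤ M} {e : M} (he : v e = 1) :
    ∀ (q : ℕ) (f : Fin q → M), ιMulti ℤ q f ∈ wedgeDecomp v e q := by
  intro q
  induction q with
  | zero =>
    intro f
    exact le_sup_left (α := Submodule ℤ (ExteriorAlgebra ℤ M))
      (Submodule.subset_span ⟨f, fun i => i.elim0, rfl⟩)
  | succ q ih =>
    intro f
    obtain ⟨a, ha, y, hy, hX⟩ := Submodule.mem_sup.mp (ih (Matrix.vecTail f))
    obtain ⟨b, hb, rfl⟩ := hy
    have hbk : CliffordAlgebra.contractLeft v b = 0 := hb.1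
    have hbD : ∀ g : M, v g = 0 → ι ℤ g * b ∈ perpWedge v q := by
      intro g hg
      have := (Submodule.mem_iInf _).mp hb.2 ⟨g, hg⟩
      simpa using this
    set c : ℤ := v (f 0) with hc
    set g : M := f 0 - c • e with hgdef
    have hg : v g = 0 := by simp [hgdef, he, hc]
    have hf0 : f 0 = g + c • e := by simp [hgdef]
    have h1 : ι ℤ e * ι ℤ e = 0 := ι_sq_zero e
    have h2 : ι ℤ g * ι ℤ e = -(ι ℤ e * ι ℤ g) :=
      eq_neg_of_add_eq_zero_left (ι_add_mul_swap g e)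
    have key : ι ℤ (f 0) * (a + LinearMap.mulLeft ℤ (ι ℤ e) b)
        = ι ℤ g * a + ι ℤ e * (c • a - ι ℤ g * b) := by
      simp only [LinearMap.mulLeft_apply]
      rw [hf0, map_add, map_zsmul (ι ℤ) c e]
      have e1 : ι ℤ g * (ι ℤ e * b) = -(ι ℤ e * (ι ℤ g * b)) := by
        rw [← mul_assoc, h2, neg_mul, mul_assoc]
      have e2 : ι ℤ e * (ι ℤ e * b) = 0 := by
        rw [← mul_assoc, h1, zero_mul]
      rw [add_mul, mul_add, mul_add, smul_mul_assoc, smul_mul_assoc, e1, e2, smul_zero,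
        mul_sub, mul_smul_comm]
      abel
    set a' : ExteriorAlgebra ℤ M := ι ℤ g * a with ha'def
    set b' : ExteriorAlgebra ℤ M := c • a - ι ℤ g * b with hb'def
    have ha' : a' ∈ perpWedge v (q + 1) := mul_perpWedge_mem hg ha
    have hb'k : CliffordAlgebra.contractLeft v b' = 0 := by
      rw [hb'def, map_sub, map_zsmul, contract_perpWedge_eq_zero ha,
        CliffordAlgebra.contractLeft_ι_mul, hg, hbk, mul_zero]
      rw [smul_zero, sub_zero, zero_sub, neg_eq_zero]
      exact zero_smul _ _
    have hb'D : ∀ g' : M, v g' = 0 → ι ℤ g' * b' ∈ perpWedge v (q + 1) := by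
      intro g' hg'
      rw [hb'def, mul_sub, mul_smul_comm]
      exact Submodule.sub_mem _ (zsmul_mem (mul_perpWedge_mem hg' ha) c)
        (mul_perpWedge_mem hg' (hbD g hg))
    have hmem : b' ∈ LinearMap.ker (CliffordAlgebra.contractLeft v) ⊓
        ⨅ g' : {g' : M // v g' = 0},
          Submodule.comap (LinearMap.mulLeft ℤ (ι ℤ (g' : M))) (perpWedge v (q + 1)) := by
      refine ⟨hb'k, (Submodule.mem_iInf _).mpr ?_⟩
      rintro ⟨g', hg'⟩
      exact hb'D g' hg'
    refine Submodule.mem_sup.mpr ⟨a', ha', LinearMap.mulLeft ℤ (ι ℤ e) b',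
      Submodule.mem_map_of_mem hmem, ?_⟩
    have hs : ιMulti ℤ (q + 1) f = ι ℤ (f 0) * ιMulti ℤ q (Matrix.vecTail f) :=
      ιMulti_succ_apply f
    rw [hs, ← hX, key]
    simp

end Aux

theorem exterior_power_perp_eq_ker_contraction {M : Type*} [AddCommGroup M] [Module ℤ M]
    [Module.Free ℤ M] [Module.Finite ℤ M]
    (v : Module.Dual ℤ M) (hv : IsPrimitiveDual v) (p : ℕ) :
    Submodule.span ℤ {x : ExteriorAlgebra ℤ M |
        ∃ f : Fin p → M, (∀ i, v (f i) = 0) ∧ x = ExteriorAlgebra.ιMulti ℤ p f}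
      = Submodule.span ℤ (Set.range (ExteriorAlgebra.ιMulti ℤ p (M := M)))
          ⊓ LinearMap.ker (CliffordAlgebra.contractLeft v) := by
  obtain ⟨e, he⟩ := hv.exists_apply_eq_one
  apply le_antisymm
  · rw [Submodule.span_le]
    rintro x ⟨f, hf, rfl⟩
    refine Submodule.mem_inf.mpr ⟨Submodule.subset_span ⟨f, rfl⟩, ?_⟩
    exact LinearMap.mem_ker.mpr (contract_ιMulti_eq_zero v f hf)
  · intro x hx
    obtain ⟨hx1, hx2⟩ := Submodule.mem_inf.mp hx
    have hC : x ∈ wedgeDecomp v e p := by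
      refine Submodule.span_le.mpr ?_ hx1
      rintro _ ⟨f, rfl⟩
      exact ιMulti_mem_wedgeDecomp he p f
    obtain ⟨a, ha, y, hy, hxy⟩ := Submodule.mem_sup.mp hC
    obtain ⟨b, hb, rfl⟩ := hy
    have hbk : CliffordAlgebra.contractLeft v b = 0 := hb.1
    have hLx : CliffordAlgebra.contractLeft v x = b := by
      rw [← hxy, map_add, contract_perpWedge_eq_zero ha, zero_add,
        LinearMap.mulLeft_apply, CliffordAlgebra.contractLeft_ι_mul, hbk, mul_zero,
        sub_zero, he]
      exact one_smul _ _
    have hb0 : b = 0 := by rw [← hLx]; exact LinearMap.mem_ker.mp hx2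
    have : x = a := by rw [← hxy, hb0]; simp
    rw [this]
    exact ha
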